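/- Lemma (mainlemma): Under the main constraint, if there exist multi-indices I, I' differing in slot j and agreeing in slot k, with c_I c_{I'} ≠ 0 and c_I c_{I'} − c_{I'_j} c_{I_j} ≠ 0, then the four vectors e^j_{00}, e^j_{01}, e^j_{10}, e^j_{11} span a subspace of dimension at most 2. -/
import Mathlib


open scoped BigOperators

/-- Complement the bit in slot `j` of the multi-index `I`. -/
def bflip {n : ℕ} (I : Fin n → Fin 2) (j : Fin n) : Fin n → Fin 2 :=
  Function.update I j (1 - I j)

/-- The main constraint on coefficients c_I and environment vectors e^j_{ir}:
c_I e^j_{i_j i_j} + c_{I_j} e^j_{i_jᶜ i_j} = c_I e^k_{i_k i_k} + c_{I_k} e^k_{i_kᶜ i_k}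
for every multi-index I and all qubits j, k. -/
def MainConstraint {n : ℕ} {V : Type*} [AddCommGroup V] [Module ℂ V]
    (c : (Fin n → Fin 2) → ℂ) (e : Fin n → Fin 2 → Fin 2 → V) : Prop :=
  ∀ (I : Fin n → Fin 2) (j k : Fin n),
    c I • e j (I j) (I j) + c (bflip I j) • e j (1 - I j) (I j)
      = c I • e k (I k) (I k) + c (bflip I k) • e k (1 - I k) (I k)

/-- Lemma (mainlemma): under the main constraint, if I and I' differ in slot j
and agree in slot k, with c_I c_{I'} ≠ 0 and c_I c_{I'} − c_{I'_j} c_{I_j} ≠ 0,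
then {e^j_{00}, e^j_{01}, e^j_{10}, e^j_{11}} spans at most two dimensions. -/
theorem stmt11 {n : ℕ} {V : Type*} [AddCommGroup V] [Module ℂ V]
    (c : (Fin n → Fin 2) → ℂ) (e : Fin n → Fin 2 → Fin 2 → V)
    (hmc : MainConstraint c e)
    (I I' : Fin n → Fin 2) (j k : Fin n)
    (hdiff : I' j ≠ I j) (hagree : I' k = I k)
    (h1 : c I * c I' ≠ 0)
    (h2 : c I * c I' - c (bflip I' j) * c (bflip I j) ≠ 0) :
    Module.finrank ℂ
      (Submodule.span ℂ ({e j 0 0, e j 0 1, e j 1 0, e j 1 1} : Set V)) ≤ 2 := by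
  classical
  have hjk : j ≠ k := by rintro rfl; exact hdiff hagree
  have hsub : ∀ x : Fin 2, (1 : Fin 2) - (1 - x) = x := by decide
  have hI'j : I' j = 1 - I j := by
    have : ∀ x y : Fin 2, y ≠ x → y = 1 - x := by decide
    exact this (I j) (I' j) hdiff
  set a := I j with ha
  set b := I k with hb
  set W : Submodule ℂ V := Submodule.span ℂ ({e k b b, e k (1-b) b} : Set V) with hW
  have hWfd : FiniteDimensional ℂ W :=
    FiniteDimensional.span_of_finite ℂ ((Set.finite_singleton _).insert _)
  have hmem1 : e k b b ∈ W := Submodule.subset_span (by left; rfl)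
  have hmem2 : e k (1-b) b ∈ W := Submodule.subset_span (by right; rfl)
  have hflipk : ∀ J : Fin n → Fin 2, bflip J j k = J k := fun J =>
    Function.update_of_ne (Ne.symm hjk) _ _
  have hflipj : ∀ J : Fin n → Fin 2, bflip J j j = 1 - J j := fun J =>
    Function.update_self _ _ _
  have hflipflip : ∀ J : Fin n → Fin 2, bflip (bflip J j) j = J := by
    intro J
    have hne : ∀ (K : Fin n → Fin 2) (i : Fin n), i ≠ j → bflip K j i = K i :=
      fun K i hi => Function.update_of_ne hi _ _
    funext i
    by_cases hi : i = j
    · subst hi; rw [hflipj, hflipj, hsub]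
    · rw [hne _ _ hi, hne _ _ hi]
  -- the four constraint instances
  have m1 : c I • e j a a + c (bflip I j) • e j (1-a) a ∈ W := by
    have := hmc I j k
    rw [← ha, ← hb] at this
    rw [this]; exact W.add_mem (W.smul_mem _ hmem1) (W.smul_mem _ hmem2)
  have m2 : c (bflip I' j) • e j a a + c I' • e j (1-a) a ∈ W := by
    have := hmc (bflip I' j) j k
    rw [hflipj, hflipflip, hI'j, hsub, hflipk, hagree] at this
    rw [this]; exact W.add_mem (W.smul_mem _ hmem1) (W.smul_mem _ hmem2)
  have m3 : c (bflip I j) • e j (1-a) (1-a) + c I • e j a (1-a) ∈ W := by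
    have := hmc (bflip I j) j k
    rw [hflipj, hflipflip, ← ha, hsub, hflipk, ← hb] at this
    rw [this]; exact W.add_mem (W.smul_mem _ hmem1) (W.smul_mem _ hmem2)
  have m4 : c I' • e j (1-a) (1-a) + c (bflip I' j) • e j a (1-a) ∈ W := by
    have := hmc I' j k
    rw [hI'j, hsub, hagree] at this
    rw [this]; exact W.add_mem (W.smul_mem _ hmem1) (W.smul_mem _ hmem2)
  -- solve the linear system
  have key : ∀ (d : ℂ) (u : V), d ≠ 0 → d • u ∈ W → u ∈ W := by
    intro d u hd h
    have := W.smul_mem d⁻¹ h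
    rwa [smul_smul, inv_mul_cancel₀ hd, one_smul] at this
  set p := c I
  set q := c (bflip I j)
  set p' := c I'
  set q' := c (bflip I' j)
  set d := p * p' - q' * q with hd
  have hdneg : -d ≠ 0 := neg_ne_zero.mpr h2
  have hu1 : e j a a ∈ W := by
    apply key d _ h2
    have heq : d • e j a a =
        p' • (p • e j a a + q • e j (1-a) a) - q • (q' • e j a a + p' • e j (1-a) a) := by
      rw [hd]; module
    rw [heq]; exact W.sub_mem (W.smul_mem _ m1) (W.smul_mem _ m2)
  have hu2 : e j (1-a) a ∈ W := by
    apply key (-d) _ hdneg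
    have heq : (-d) • e j (1-a) a =
        q' • (p • e j a a + q • e j (1-a) a) - p • (q' • e j a a + p' • e j (1-a) a) := by
      rw [hd]; module
    rw [heq]; exact W.sub_mem (W.smul_mem _ m1) (W.smul_mem _ m2)
  have hv1 : e j (1-a) (1-a) ∈ W := by
    apply key (-d) _ hdneg
    have heq : (-d) • e j (1-a) (1-a) =
        q' • (q • e j (1-a) (1-a) + p • e j a (1-a))
          - p • (p' • e j (1-a) (1-a) + q' • e j a (1-a)) := by
      rw [hd]; module
    rw [heq]; exact W.sub_mem (W.smul_mem _ m3) (W.smul_mem _ m4)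
  have hv2 : e j a (1-a) ∈ W := by
    apply key d _ h2
    have heq : d • e j a (1-a) =
        p' • (q • e j (1-a) (1-a) + p • e j a (1-a))
          - q • (p' • e j (1-a) (1-a) + q' • e j a (1-a)) := by
      rw [hd]; module
    rw [heq]; exact W.sub_mem (W.smul_mem _ m3) (W.smul_mem _ m4)
  have hall : ∀ x y : Fin 2, e j x y ∈ W := by
    obtain ha0 | ha1 : a = 0 ∨ a = 1 := by omega
    · rw [ha0] at hu1 hu2 hv1 hv2
      simp only [show ((1:Fin 2) - 0) = 1 by decide] at hu2 hv1 hv2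
      intro x y
      fin_cases x <;> fin_cases y <;> assumption
    · rw [ha1] at hu1 hu2 hv1 hv2
      simp only [show ((1:Fin 2) - 1) = 0 by decide] at hu2 hv1 hv2
      intro x y
      fin_cases x <;> fin_cases y <;> assumption
  have hle : Submodule.span ℂ ({e j 0 0, e j 0 1, e j 1 0, e j 1 1} : Set V) ≤ W := by
    rw [Submodule.span_le]
    rintro x (rfl | rfl | rfl | rfl) <;> exact hall _ _
  have h2' : Module.finrank ℂ W ≤ 2 := by
    have hset : ({e k b b, e k (1-b) b} : Set V)
        = (↑({e k b b, e k (1-b) b} : Finset V) : Set V) := by simp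
    rw [hW, hset]
    refine (finrank_span_finset_le_card _).trans ?_
    exact (Finset.card_insert_le _ _).trans (by simp)
  exact (Submodule.finrank_mono hle).trans h2'
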